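/- Let D = {z ∈ ℂ : |z| ≤ 1} be the closed unit disk and A the Lebesgue (area) measure on ℂ. For every integer n ≥ 1, (1/π^n) ∫_{D^n} max{log|x_1|, …, log|x_n|} dA(x_1)⋯dA(x_n) = −1/(2n). -/

import Mathlib

open MeasureTheory

open Set Metric Real in
lemma arealMahler_aux (n : ℕ) (hn : 0 < n) :
    ∫ x in Set.univ.pi fun _ : Fin n => Metric.closedBall (0 : ℂ) 1,
        Finset.univ.sup' (Finset.univ_nonempty_iff.mpr ⟨⟨0, hn⟩⟩)
          (fun i => Real.log (‖x i‖)) = -(Real.pi ^ n / (2 * n)) := by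
  set ne : (Finset.univ : Finset (Fin n)).Nonempty := Finset.univ_nonempty_iff.mpr ⟨⟨0, hn⟩⟩
  set S : Set (Fin n → ℂ) := Set.univ.pi fun _ : Fin n => Metric.closedBall (0 : ℂ) 1 with hS
  set g : (Fin n → ℂ) → ℝ := fun x => Finset.univ.sup' ne fun i => Real.log (‖x i‖)
    with hg
  have hSm : MeasurableSet S :=
    MeasurableSet.univ_pi fun i => measurableSet_closedBall
  have hgm : Measurable g := by
    have : Measurable (Finset.univ.sup' ne fun (i : Fin n) (x : Fin n → ℂ) =>
        Real.log (‖x i‖)) :=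
      Finset.measurable_sup' ne fun i _ =>
        Real.measurable_log.comp (continuous_norm.measurable.comp (measurable_pi_apply i))
    have heq : g = Finset.univ.sup' ne fun (i : Fin n) (x : Fin n → ℂ) =>
        Real.log (‖x i‖) := by
      funext x
      simp [hg, Finset.sup'_apply]
    rw [heq]; exact this
  -- nonnegativity of -g on S
  have hnn : 0 ≤ᵐ[volume.restrict S] fun x => -g x := by
    filter_upwards [ae_restrict_mem hSm] with x hx
    have : g x ≤ 0 := by
      apply Finset.sup'_le
      intro i _
      apply Real.log_nonpos (norm_nonneg _)
      simpa using (hx i (Set.mem_univ i))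
    simp only [Pi.zero_apply]
    linarith
  have key : ∫ x in S, (-g x) = Real.pi ^ n / (2 * n) := by
    rw [integral_eq_lintegral_of_nonneg_ae hnn
      (hgm.neg.aestronglyMeasurable.restrict)]
    rw [lintegral_eq_lintegral_meas_lt _ hnn (hgm.neg.aemeasurable.restrict)]
    have hmeas : ∀ t ∈ Ioi (0:ℝ), (volume.restrict S) {x : Fin n → ℂ | t < -g x}
        = ENNReal.ofReal (Real.pi ^ n * Real.exp (-(2 * n * t))) := by
      intro t ht
      have ht : (0:ℝ) < t := ht
      rw [Measure.restrict_apply (measurableSet_lt measurable_const hgm.neg : MeasurableSet {x : Fin n → ℂ | t < -g x})]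
      have hset : {x : Fin n → ℂ | t < -g x} ∩ S =
          Set.univ.pi fun _ : Fin n => Metric.ball (0:ℂ) (Real.exp (-t)) \ {0} := by
        ext x
        simp only [Set.mem_inter_iff, Set.mem_setOf_eq, hS, Set.mem_pi, Set.mem_univ,
          forall_true_left, Metric.mem_closedBall, Metric.mem_ball, Set.mem_diff,
          Set.mem_singleton_iff, Complex.dist_eq, sub_zero, hg]
        constructor
        · rintro ⟨h1, h2⟩ i
          have hlt : Real.log (‖x i‖) < -t := by
            have := Finset.sup'_lt_iff (f := fun i => Real.log (‖x i‖))
              (a := -t) ne |>.mp (by linarith [h1])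
            · exact this i (Finset.mem_univ i)
          have hx0 : x i ≠ 0 := by
            intro h
            rw [h] at hlt
            simp at hlt
            linarith
          have habs : 0 < ‖x i‖ := by
            simpa [norm_pos_iff] using hx0
          refine ⟨?_, hx0⟩
          rw [Real.log_lt_iff_lt_exp habs] at hlt
          simpa using hlt
        · intro h
          constructor
          · rw [show t < -Finset.univ.sup' ne (fun i => Real.log (‖x i‖))
              ↔ Finset.univ.sup' ne (fun i => Real.log (‖x i‖)) < -t by
                constructor <;> intro <;> linarith]
            rw [Finset.sup'_lt_iff]
            intro i _
            obtain ⟨h1, h2⟩ := h i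
            have habs : 0 < ‖x i‖ := by
              simpa [norm_pos_iff] using h2
            rw [Real.log_lt_iff_lt_exp habs]
            simpa using h1
          · intro i
            obtain ⟨h1, _⟩ := h i
            have : Real.exp (-t) ≤ 1 := by
              rw [Real.exp_le_one_iff]; linarith
            linarith
      rw [hset, volume_pi_pi]
      have hball : volume (Metric.ball (0:ℂ) (Real.exp (-t)) \ {0})
          = ENNReal.ofReal (Real.pi * Real.exp (-t) ^ 2) := by
        rw [measure_diff_null (measure_singleton 0), Complex.volume_ball]
        rw [← ENNReal.ofReal_pow (Real.exp_nonneg _)]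
        rw [← ENNReal.ofReal_coe_nnreal, ← ENNReal.ofReal_mul (by positivity)]
        rw [NNReal.coe_real_pi, mul_comm]
      rw [Finset.prod_const, hball, Finset.card_univ, Fintype.card_fin,
        ← ENNReal.ofReal_pow (by positivity)]
      congr 1
      rw [mul_pow, ← pow_mul, ← Real.exp_nat_mul]
      congr 1
      push_cast
      ring
    rw [setLIntegral_congr_fun measurableSet_Ioi hmeas]
    have hint : IntegrableOn (fun t => Real.pi ^ n * Real.exp (-(2 * n * t))) (Ioi 0) := by
      have : IntegrableOn (fun t => Real.exp (-(2 * (n:ℝ)) * t)) (Ioi 0) :=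
        exp_neg_integrableOn_Ioi 0 (by positivity)
      simpa [neg_mul, mul_assoc, IntegrableOn] using this.const_mul (Real.pi ^ n)
    rw [← ofReal_integral_eq_lintegral_ofReal hint
      (Filter.Eventually.of_forall fun t => by positivity)]
    rw [ENNReal.toReal_ofReal (by positivity)]
    rw [MeasureTheory.integral_const_mul]
    have hI : (∫ t in Ioi (0:ℝ), Real.exp (-(2 * n * t))) = (2 * (n:ℝ))⁻¹ := by
      have h := integral_comp_mul_left_Ioi (fun u => Real.exp (-u)) 0 (b := 2 * (n:ℝ))
        (by positivity)
      simp only [mul_zero, smul_eq_mul, integral_exp_neg_Ioi, neg_zero, Real.exp_zero,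
        mul_one] at h
      exact h
    rw [hI]
    ring
  have : ∫ x in S, g x = -∫ x in S, (-g x) := by
    rw [integral_neg]; ring
  rw [show (∫ x in S, Finset.univ.sup' ne fun i => Real.log (‖x i‖))
      = ∫ x in S, g x from rfl, this, key]

/-- The generalized areal Mahler measure of `x₁, …, x_n` equals `−1/(2n)`. -/
theorem arealMahler_max (n : ℕ) (hn : 0 < n) :
    (1 / Real.pi ^ n) *
      ∫ x in Set.univ.pi fun _ : Fin n => Metric.closedBall (0 : ℂ) 1,
        Finset.univ.sup' (Finset.univ_nonempty_iff.mpr ⟨⟨0, hn⟩⟩)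
          (fun i => Real.log (‖x i‖)) =
    -1 / (2 * n) := by
  rw [arealMahler_aux n hn]
  have hpi : Real.pi ^ n ≠ 0 := by positivity
  have hn' : (n:ℝ) ≠ 0 := Nat.cast_ne_zero.mpr hn.ne'
  field_simp
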